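/- Let ψ : ℝ² → ℂ be defined by ψ(x) = |v(|x|)|^{1/2} η(x) where |v(x)| ≤ α₁ e^{−α₂|x|} and η ∈ L²(ℝ²) with ‖η‖ = 1. Then the Fourier transform ψ̂ satisfies |ψ̂(p)| ≤ α|p| for some constant α > 0 and all p ∈ ℝ², where one may take α = π^{−1} ‖ |x| |v(|x|)|^{1/2} ‖_{L²}. -/

import Mathlib

open MeasureTheory Real

/-- Fourier transform on ℝ² with the normalization `(2π)⁻¹ ∫ e^{-i p·x} f(x) dx`. -/
noncomputable def FT (f : EuclideanSpace ℝ (Fin 2) → ℂ)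
    (p : EuclideanSpace ℝ (Fin 2)) : ℂ :=
  (2 * Real.pi)⁻¹ * ∫ x : EuclideanSpace ℝ (Fin 2),
    Complex.exp (-Complex.I * ((inner ℝ p x : ℝ) : ℂ)) * f x

private lemma pow6_le_exp (t : ℝ) (ht : 0 ≤ t) : t ^ 6 / 720 ≤ Real.exp t := by
  have h := Real.sum_le_exp_of_nonneg ht 7
  have hs : ∀ i ∈ Finset.range 7, (0:ℝ) ≤ t ^ i / (i.factorial : ℝ) := fun i _ =>
    div_nonneg (pow_nonneg ht i) (by positivity)
  calc t ^ 6 / 720 = t ^ 6 / ((Nat.factorial 6 : ℕ) : ℝ) := by norm_num [Nat.factorial]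
    _ ≤ ∑ i ∈ Finset.range 7, t ^ i / (i.factorial : ℝ) :=
        Finset.single_le_sum hs (by norm_num)
    _ ≤ Real.exp t := h

private lemma exp_key (a : ℝ) (ha : 0 < a) (r : ℝ) (hr : 0 ≤ r) :
    Real.exp (-a * r) * (1 + r) ^ 6 ≤ 720 * Real.exp a / a ^ 6 := by
  have h1 : (0:ℝ) < 1 + r := by linarith
  have key : (1 + r) ^ 6 ≤ (720 * Real.exp a / a ^ 6) * Real.exp (a * r) := by
    have h6 := pow6_le_exp (a * (1 + r)) (by positivity)
    rw [div_le_iff₀ (by norm_num)] at h6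
    have h3 : Real.exp (a * (1 + r)) = Real.exp a * Real.exp (a * r) := by
      rw [← Real.exp_add]; ring_nf
    have h2 : (a * (1+r)) ^ 6 = a ^ 6 * (1+r) ^ 6 := by ring
    rw [h2, h3] at h6
    rw [div_mul_eq_mul_div, le_div_iff₀ (by positivity)]
    nlinarith [Real.exp_pos (a*r), Real.exp_pos a]
  have hE : Real.exp (-a * r) = (Real.exp (a * r))⁻¹ := by
    rw [← Real.exp_neg]; ring_nf
  rw [hE, mul_comm, ← div_eq_mul_inv, div_le_iff₀ (Real.exp_pos _)]
  exact key

private lemma decay_sq (a : ℝ) (ha : 0 < a) (r : ℝ) (hr : 0 ≤ r) :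
    r ^ 2 * Real.exp (-a * r) ≤ (720 * Real.exp a / a ^ 6) * (1 + r) ^ (-(4:ℝ)) := by
  have h1 : (0:ℝ) < 1 + r := by linarith
  have hrpow : (1 + r) ^ (-(4:ℝ)) = ((1 + r) ^ (4:ℕ))⁻¹ := by
    rw [← Real.rpow_natCast (1+r) 4, ← Real.rpow_neg h1.le]; norm_num
  rw [hrpow, ← div_eq_mul_inv, le_div_iff₀ (by positivity)]
  have key := exp_key a ha r hr
  have hx : r ^ 2 * (1+r) ^ 4 ≤ (1+r) ^ 6 := by nlinarith [pow_nonneg h1.le 4, hr]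
  calc r ^ 2 * Real.exp (-a*r) * (1+r) ^ 4
      = Real.exp (-a*r) * (r ^ 2 * (1+r) ^ 4) := by ring
    _ ≤ Real.exp (-a*r) * (1+r) ^ 6 := mul_le_mul_of_nonneg_left hx (Real.exp_pos _).le
    _ ≤ 720 * Real.exp a / a ^ 6 := key

private lemma decay_one (a : ℝ) (ha : 0 < a) (r : ℝ) (hr : 0 ≤ r) :
    Real.exp (-a * r) ≤ (720 * Real.exp a / a ^ 6) * (1 + r) ^ (-(4:ℝ)) := by
  have h1 : (0:ℝ) < 1 + r := by linarith
  have hrpow : (1 + r) ^ (-(4:ℝ)) = ((1 + r) ^ (4:ℕ))⁻¹ := by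
    rw [← Real.rpow_natCast (1+r) 4, ← Real.rpow_neg h1.le]; norm_num
  rw [hrpow, ← div_eq_mul_inv, le_div_iff₀ (by positivity)]
  have key := exp_key a ha r hr
  have hx : (1+r) ^ 4 ≤ (1+r) ^ 6 := pow_le_pow_right₀ (by linarith) (by norm_num)
  calc Real.exp (-a*r) * (1+r) ^ 4
      ≤ Real.exp (-a*r) * (1+r) ^ 6 := mul_le_mul_of_nonneg_left hx (Real.exp_pos _).le
    _ ≤ 720 * Real.exp a / a ^ 6 := key

private abbrev E2 : Type := EuclideanSpace ℝ (Fin 2)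

private lemma exp_sub_one_bound (t : ℝ) :
    ‖Complex.exp (-Complex.I * t) - 1‖ ≤ 2 * |t| := by
  rcases le_or_gt |t| 1 with h | h
  · have := Complex.norm_exp_sub_one_le (x := -Complex.I * t) (by simpa using h)
    simpa using this
  · have h1 : ‖Complex.exp (-Complex.I * t)‖ = 1 := by
      simp [Complex.norm_exp]
    calc ‖Complex.exp (-Complex.I * t) - 1‖
        ≤ ‖Complex.exp (-Complex.I * t)‖ + ‖(1:ℂ)‖ := norm_sub_le _ _
      _ = 2 := by rw [h1]; norm_num
      _ ≤ 2 * |t| := by nlinarith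

theorem stmt5 (v : ℝ → ℝ) (hv : Measurable v) (α₁ α₂ : ℝ) (hα₁ : 0 < α₁)
    (hα₂ : 0 < α₂) (hdecay : ∀ x : ℝ, 0 ≤ x → |v x| ≤ α₁ * Real.exp (-α₂ * x))
    (η : EuclideanSpace ℝ (Fin 2) → ℂ) (hη : MemLp η 2 volume)
    (hnorm : ∫ x : EuclideanSpace ℝ (Fin 2), ‖η x‖ ^ 2 = 1)
    (hodd : ∀ x, η (-x) = -η x)
    (ψ : EuclideanSpace ℝ (Fin 2) → ℂ)
    (hψ : ∀ x, ψ x = (Real.sqrt |v ‖x‖| : ℂ) * η x)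
    (α : ℝ)
    (hα : α = π⁻¹ * Real.sqrt (∫ x : EuclideanSpace ℝ (Fin 2), ‖x‖ ^ 2 * |v ‖x‖|)) :
    ∀ p : EuclideanSpace ℝ (Fin 2), ‖FT ψ p‖ ≤ α * ‖p‖ := by
  intro p
  set m : E2 → ℝ := fun x => Real.sqrt |v ‖x‖| with hm
  set f : E2 → ℝ := fun x => ‖x‖ * m x with hf
  set C : ℝ := α₁ * (720 * Real.exp α₂ / α₂ ^ 6) with hCdef
  have hmnn : ∀ x, 0 ≤ m x := fun x => Real.sqrt_nonneg _
  have hmeas_m : Measurable m :=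
    Real.continuous_sqrt.measurable.comp (hv.comp measurable_norm).abs
  have hd : ∀ x : E2, |v ‖x‖| ≤ α₁ * Real.exp (-α₂ * ‖x‖) :=
    fun x => hdecay _ (norm_nonneg x)
  -- integrable dominating function
  have hjap : Integrable (fun x : E2 => C * (1 + ‖x‖) ^ (-(4:ℝ))) volume := by
    exact (integrable_one_add_norm (E := E2) (by simp only [E2]; norm_num [finrank_euclideanSpace])).const_mul C
  -- Integrability of ‖x‖² |v ‖x‖|
  have hIsq : Integrable (fun x : E2 => ‖x‖ ^ 2 * |v ‖x‖|) volume := by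
    refine hjap.mono' ?_ (Filter.Eventually.of_forall fun x => ?_)
    · exact ((measurable_norm.pow_const 2).mul
        (hv.comp measurable_norm).abs).aestronglyMeasurable
    · have h1 : ‖x‖ ^ 2 * |v ‖x‖| ≤ ‖x‖ ^ 2 * (α₁ * Real.exp (-α₂ * ‖x‖)) :=
        mul_le_mul_of_nonneg_left (hd x) (by positivity)
      have h2 := decay_sq α₂ hα₂ ‖x‖ (norm_nonneg x)
      rw [Real.norm_eq_abs, abs_of_nonneg (by positivity)]
      calc ‖x‖ ^ 2 * |v ‖x‖| ≤ α₁ * (‖x‖ ^ 2 * Real.exp (-α₂ * ‖x‖)) := by linarith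
        _ ≤ C * (1 + ‖x‖) ^ (-(4:ℝ)) := by
            rw [hCdef, mul_assoc]
            exact mul_le_mul_of_nonneg_left h2 hα₁.le
  have hIv : Integrable (fun x : E2 => |v ‖x‖|) volume := by
    refine hjap.mono' (hv.comp measurable_norm).abs.aestronglyMeasurable
      (Filter.Eventually.of_forall fun x => ?_)
    have h2 := decay_one α₂ hα₂ ‖x‖ (norm_nonneg x)
    rw [Real.norm_eq_abs, abs_abs]
    calc |v ‖x‖| ≤ α₁ * Real.exp (-α₂ * ‖x‖) := hd x
      _ ≤ C * (1 + ‖x‖) ^ (-(4:ℝ)) := by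
          rw [hCdef, mul_assoc]
          exact mul_le_mul_of_nonneg_left h2 hα₁.le
  -- MemLp facts
  have hm2 : MemLp m 2 volume := by
    rw [memLp_two_iff_integrable_sq hmeas_m.aestronglyMeasurable]
    have : (fun x : E2 => m x ^ 2) = fun x : E2 => |v ‖x‖| := by
      funext x; exact Real.sq_sqrt (abs_nonneg _)
    rwa [this]
  have hf2 : MemLp f 2 volume := by
    rw [memLp_two_iff_integrable_sq (show Measurable f from measurable_norm.mul hmeas_m).aestronglyMeasurable]
    have : (fun x : E2 => f x ^ 2) = fun x : E2 => ‖x‖ ^ 2 * |v ‖x‖| := by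
      funext x
      simp only [hf, mul_pow]
      rw [Real.sq_sqrt (abs_nonneg _)]
    rwa [this]
  -- ψ as a scalar multiple
  have hψm : ψ = fun x => m x • η x := by
    funext x; rw [hψ x, Complex.real_smul]
  have hψint : Integrable ψ volume := by
    rw [hψm]
    have : MemLp (m • η) 1 volume :=
      MemLp.smul (𝕜 := ℝ) hη hm2
    exact memLp_one_iff_integrable.mp this
  -- integral of ψ vanishes
  have hzero : (∫ x : E2, ψ x) = 0 := by
    have hneg : ∀ x, ψ (-x) = -ψ x := by
      intro x
      rw [hψm]
      simp only [hm, norm_neg, hodd x, smul_neg]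
    have h1 : (∫ x : E2, ψ (-x)) = ∫ x : E2, ψ x := integral_neg_eq_self ψ volume
    have h2 : (∫ x : E2, ψ (-x)) = -∫ x : E2, ψ x := by
      simp_rw [hneg]; exact integral_neg ψ
    have := h1.symm.trans h2
    have h3 : (2:ℂ) • (∫ x : E2, ψ x) = 0 := by
      rw [two_smul]
      nth_rewrite 1 [this]
      abel
    simpa using h3
  -- integrands
  have hcont : Continuous fun x : E2 => Complex.exp (-Complex.I * ((inner ℝ p x : ℝ) : ℂ)) := by
    exact Complex.continuous_exp.comp (continuous_const.mul
      (Complex.continuous_ofReal.comp (Continuous.inner continuous_const continuous_id)))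
  have hexpint : Integrable
      (fun x : E2 => Complex.exp (-Complex.I * ((inner ℝ p x : ℝ) : ℂ)) * ψ x) volume := by
    refine hψint.bdd_mul hcont.aestronglyMeasurable (c := 1) (Filter.Eventually.of_forall fun x => ?_)
    simp [Complex.norm_exp]
  have hsubint : Integrable
      (fun x : E2 => (Complex.exp (-Complex.I * ((inner ℝ p x : ℝ) : ℂ)) - 1) * ψ x) volume := by
    refine hψint.bdd_mul (hcont.sub continuous_const).aestronglyMeasurable (c := 2) (Filter.Eventually.of_forall fun x => ?_)
    calc ‖Complex.exp (-Complex.I * ((inner ℝ p x : ℝ) : ℂ)) - 1‖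
        ≤ ‖Complex.exp (-Complex.I * ((inner ℝ p x : ℝ) : ℂ))‖ + ‖(1:ℂ)‖ := norm_sub_le _ _
      _ ≤ 2 := by simp [Complex.norm_exp]; norm_num
  -- pointwise bound
  have hfnn : ∀ x, 0 ≤ f x := fun x => mul_nonneg (norm_nonneg _) (hmnn x)
  have hptwise : ∀ x : E2, ‖(Complex.exp (-Complex.I * ((inner ℝ p x : ℝ) : ℂ)) - 1) * ψ x‖
      ≤ 2 * ‖p‖ * (f x * ‖η x‖) := by
    intro x
    rw [norm_mul]
    have h1 : ‖ψ x‖ = m x * ‖η x‖ := by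
      rw [hψm]
      simp only [norm_smul, Real.norm_eq_abs, abs_of_nonneg (hmnn x)]
    have h2 := exp_sub_one_bound (inner ℝ p x : ℝ)
    have h3 : |(inner ℝ p x : ℝ)| ≤ ‖p‖ * ‖x‖ := abs_real_inner_le_norm p x
    have h4 : ‖Complex.exp (-Complex.I * ((inner ℝ p x : ℝ) : ℂ)) - 1‖ ≤ 2 * (‖p‖ * ‖x‖) := by
      nlinarith
    rw [h1]
    have h5 : 0 ≤ m x * ‖η x‖ := mul_nonneg (hmnn x) (norm_nonneg _)
    calc ‖Complex.exp (-Complex.I * ((inner ℝ p x : ℝ) : ℂ)) - 1‖ * (m x * ‖η x‖)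
        ≤ 2 * (‖p‖ * ‖x‖) * (m x * ‖η x‖) := mul_le_mul_of_nonneg_right h4 h5
      _ = 2 * ‖p‖ * (f x * ‖η x‖) := by simp only [hf]; ring
  -- integrability of the dominating function
  have hfηint : Integrable (fun x : E2 => f x * ‖η x‖) volume := by
    have h0 : MemLp (fun x : E2 => ‖η x‖) 2 volume := hη.norm
    have h1 : MemLp (f • fun x : E2 => ‖η x‖) 1 volume :=
      MemLp.smul (𝕜 := ℝ) h0 hf2
    have h2 := memLp_one_iff_integrable.mp h1
    simpa [Pi.smul_apply', smul_eq_mul, Pi.mul_def] using h2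
  have hgint : Integrable (fun x : E2 => 2 * ‖p‖ * (f x * ‖η x‖)) volume :=
    hfηint.const_mul _
  -- norm of the integral
  have hnormint : ‖∫ x : E2, (Complex.exp (-Complex.I * ((inner ℝ p x : ℝ) : ℂ)) - 1) * ψ x‖
      ≤ 2 * ‖p‖ * ∫ x : E2, f x * ‖η x‖ := by
    have h := norm_integral_le_of_norm_le hgint (Filter.Eventually.of_forall hptwise)
    rwa [integral_const_mul] at h
  -- Cauchy–Schwarz
  set S : ℝ := ∫ x : E2, ‖x‖ ^ 2 * |v ‖x‖| with hS
  have hCS : (∫ x : E2, f x * ‖η x‖) ≤ Real.sqrt S := by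
    have h22 : Real.HolderConjugate 2 2 := Real.HolderConjugate.two_two
    have hfL : MemLp f (ENNReal.ofReal 2) volume := by
      rw [show ENNReal.ofReal 2 = 2 by norm_num]; exact hf2
    have hgL : MemLp (fun x : E2 => ‖η x‖) (ENNReal.ofReal 2) volume := by
      rw [show ENNReal.ofReal 2 = 2 by norm_num]; exact hη.norm
    have hH := integral_mul_norm_le_Lp_mul_Lq (μ := volume) h22 hfL hgL
    have e1 : (fun a : E2 => ‖f a‖ * ‖‖η a‖‖) = fun a : E2 => f a * ‖η a‖ := by
      funext a
      rw [norm_norm, Real.norm_eq_abs, abs_of_nonneg (hfnn a)]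
    have e2 : (fun a : E2 => ‖f a‖ ^ (2:ℝ)) = fun a : E2 => ‖a‖ ^ 2 * |v ‖a‖| := by
      funext a
      rw [show (2:ℝ) = ((2:ℕ):ℝ) by norm_num, Real.rpow_natCast, Real.norm_eq_abs,
        abs_of_nonneg (hfnn a)]
      simp only [hf, mul_pow]
      rw [Real.sq_sqrt (abs_nonneg _)]
    have e3 : (fun a : E2 => ‖‖η a‖‖ ^ (2:ℝ)) = fun a : E2 => ‖η a‖ ^ 2 := by
      funext a
      rw [show (2:ℝ) = ((2:ℕ):ℝ) by norm_num, Real.rpow_natCast, norm_norm]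
    rw [e1, e2, e3, hnorm] at hH
    calc (∫ x : E2, f x * ‖η x‖) ≤ S ^ (1/(2:ℝ)) * (1:ℝ) ^ (1/(2:ℝ)) := hH
      _ = Real.sqrt S := by rw [Real.one_rpow, mul_one, Real.sqrt_eq_rpow]
  -- rewrite FT using the vanishing integral
  have hFTeq : (∫ x : E2, Complex.exp (-Complex.I * ((inner ℝ p x : ℝ) : ℂ)) * ψ x)
      = ∫ x : E2, (Complex.exp (-Complex.I * ((inner ℝ p x : ℝ) : ℂ)) - 1) * ψ x := by
    have : (fun x : E2 => (Complex.exp (-Complex.I * ((inner ℝ p x : ℝ) : ℂ)) - 1) * ψ x)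
        = fun x : E2 => Complex.exp (-Complex.I * ((inner ℝ p x : ℝ) : ℂ)) * ψ x - ψ x := by
      funext x; ring
    rw [this, integral_sub hexpint hψint, hzero, sub_zero]
  -- assemble
  have hSnn : 0 ≤ Real.sqrt S := Real.sqrt_nonneg _
  have hπ : (0:ℝ) < (2 * π)⁻¹ := by positivity
  have hFTnorm : ‖FT ψ p‖ = (2 * π)⁻¹
      * ‖∫ x : E2, Complex.exp (-Complex.I * ((inner ℝ p x : ℝ) : ℂ)) * ψ x‖ := by
    rw [FT, norm_mul]
    norm_num [abs_of_nonneg Real.pi_nonneg, Real.pi_nonneg]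
  calc ‖FT ψ p‖ = (2 * π)⁻¹
        * ‖∫ x : E2, (Complex.exp (-Complex.I * ((inner ℝ p x : ℝ) : ℂ)) - 1) * ψ x‖ := by
        rw [hFTnorm, hFTeq]
    _ ≤ (2 * π)⁻¹ * (2 * ‖p‖ * ∫ x : E2, f x * ‖η x‖) :=
        mul_le_mul_of_nonneg_left hnormint hπ.le
    _ ≤ (2 * π)⁻¹ * (2 * ‖p‖ * Real.sqrt S) := by
        apply mul_le_mul_of_nonneg_left _ hπ.le
        exact mul_le_mul_of_nonneg_left hCS (by positivity)
    _ = (π⁻¹ * Real.sqrt S) * ‖p‖ := by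
        field_simp
    _ = α * ‖p‖ := by rw [hα, hS]
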